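/- Let n ≥ 2 and let G be the path graph on Fin n with the natural linear order on Fin n (so vertex ids increase from left to right along the path, and vertex 0 is the minimum). Then for every k : ℕ the Hash-to-Min clusters satisfy: (i) for every vertex j with (j : ℕ) ≤ 2^k, vertex 0 ∈ C k j and j ∈ C k 0; (ii) for all vertices i < j with (j : ℕ) − (i : ℕ) = 2^k, i ∈ C k j and j ∈ C k i; (iii) for all vertices i, j, if i ∈ C k j then the distance |(i : ℕ) − (j : ℕ)| ≤ 2^k. -/

import Mathlib

open scoped Classical

/-- On the path graph on `Fin n` (`n ≥ 2`) with the natural order, after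
`k` rounds of Hash-to-Min: (i) vertex `0` and every vertex `j` with `j ≤ 2^k` know each
other; (ii) any two vertices exactly `2^k` apart know each other; (iii) a vertex only
knows vertices at distance at most `2^k`. -/
theorem hashToMin_monotone_path {n : ℕ} (hn : 2 ≤ n)
    (G : SimpleGraph (Fin n)) [DecidableRel G.Adj]
    (hG : ∀ i j : Fin n, G.Adj i j ↔ Nat.dist i.val j.val = 1)
    (C : ℕ → Fin n → Finset (Fin n))
    (hC0 : ∀ v : Fin n, C 0 v = {v} ∪ G.neighborFinset v)
    (hCs : ∀ (k : ℕ) (v : Fin n), C (k + 1) v =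
      ((Finset.univ.filter fun u : Fin n => (C k u).min = (v : WithTop (Fin n))).biUnion
        (C k)) ∪
      (Finset.univ.filter fun w : Fin n =>
        ∃ u : Fin n, v ∈ C k u ∧ (C k u).min = (w : WithTop (Fin n)))) :
    ∀ k : ℕ,
      (∀ j : Fin n, (j : ℕ) ≤ 2 ^ k →
        (⟨0, by omega⟩ : Fin n) ∈ C k j ∧ j ∈ C k ⟨0, by omega⟩) ∧
      (∀ i j : Fin n, i < j → (j : ℕ) - (i : ℕ) = 2 ^ k →
        i ∈ C k j ∧ j ∈ C k i) ∧
      (∀ i j : Fin n, i ∈ C k j → Nat.dist (i : ℕ) (j : ℕ) ≤ 2 ^ k) := by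
  have hmem0 : ∀ v x : Fin n, x ∈ C 0 v ↔ x = v ∨ Nat.dist v.val x.val = 1 := by
    intro v x
    rw [hC0]
    simp [SimpleGraph.mem_neighborFinset, hG]
  intro k
  induction k with
  | zero =>
    refine ⟨?_, ?_, ?_⟩
    · intro j hj
      simp only [pow_zero] at hj
      constructor
      · rw [hmem0]
        rcases Nat.lt_or_ge j.val 1 with h | h
        · left; apply Fin.ext; simp only [Fin.val_mk]; omega
        · right; show Nat.dist j.val 0 = 1; simp [Nat.dist]; omega
      · rw [hmem0]
        rcases Nat.lt_or_ge j.val 1 with h | h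
        · left; apply Fin.ext; simp only [Fin.val_mk]; omega
        · right; show Nat.dist 0 j.val = 1; simp [Nat.dist]; omega
    · intro i j hij hd
      simp only [pow_zero] at hd
      have hij' : i.val < j.val := hij
      constructor
      · rw [hmem0]; right; simp [Nat.dist]; omega
      · rw [hmem0]; right; simp [Nat.dist]; omega
    · intro i j hij
      rw [hmem0] at hij
      rcases hij with h | h
      · subst h; simp [Nat.dist]
      · simp only [pow_zero]
        simp [Nat.dist] at h ⊢; omega
  | succ k ih =>
    obtain ⟨ih1, ih2, ih3⟩ := ih
    have hN : 0 < 2 ^ k := Nat.pow_pos (by omega)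
    -- the minimum of C k u
    have hmin : ∀ u : Fin n,
        (C k u).min = ((⟨u.val - 2 ^ k, by omega⟩ : Fin n) : WithTop (Fin n)) := by
      intro u
      set m : Fin n := ⟨u.val - 2 ^ k, by omega⟩ with hm
      have hmmem : m ∈ C k u := by
        rcases le_or_gt u.val (2 ^ k) with h | h
        · have : m = (⟨0, by omega⟩ : Fin n) := Fin.ext (by simp [hm]; omega)
          rw [this]
          exact (ih1 u h).1
        · refine (ih2 m u ?_ ?_).1
          · exact Fin.mk_lt_mk.mpr (by omega)
          · simp [hm]; omega
      refine le_antisymm (Finset.min_le hmmem) (Finset.le_min ?_)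
      intro b hb
      have := ih3 b u hb
      simp [Nat.dist] at this
      exact WithTop.coe_le_coe.mpr (Fin.mk_le_mk.mpr (by omega))
    have hmemS : ∀ v x : Fin n, x ∈ C (k + 1) v ↔
        (∃ u : Fin n, (C k u).min = (v : WithTop (Fin n)) ∧ x ∈ C k u) ∨
        (∃ u : Fin n, v ∈ C k u ∧ (C k u).min = (x : WithTop (Fin n))) := by
      intro v x
      rw [hCs]
      simp only [Finset.mem_union, Finset.mem_biUnion, Finset.mem_filter, Finset.mem_univ,
        true_and]
    have hcoe : ∀ a b : Fin n,
        ((a : WithTop (Fin n)) = (b : WithTop (Fin n))) ↔ a = b := fun a b =>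
      WithTop.coe_eq_coe
    refine ⟨?_, ?_, ?_⟩
    · intro j hj
      rcases le_or_gt j.val (2 ^ k) with h | h
      · -- use u = 0
        have hu0 : (C k (⟨0, by omega⟩ : Fin n)).min =
            ((⟨0, by omega⟩ : Fin n) : WithTop (Fin n)) := by
          rw [hmin]; exact (hcoe _ _).mpr (Fin.ext (by simp))
        constructor
        · rw [hmemS]; right
          exact ⟨⟨0, by omega⟩, (ih1 j h).2, hu0⟩
        · rw [hmemS]; left
          exact ⟨⟨0, by omega⟩, hu0, (ih1 j h).2⟩
      · -- use u = j - 2^k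
        set u : Fin n := ⟨j.val - 2 ^ k, by omega⟩ with hu
        have humin : (C k u).min = ((⟨0, by omega⟩ : Fin n) : WithTop (Fin n)) := by
          rw [hmin]
          refine (hcoe _ _).mpr (Fin.ext ?_)
          simp only [hu, Fin.val_mk]
          omega
        have hjmem : j ∈ C k u := by
          refine (ih2 u j (Fin.mk_lt_mk.mpr (by omega)) ?_).2
          simp [hu]; omega
        constructor
        · rw [hmemS]; right; exact ⟨u, hjmem, humin⟩
        · rw [hmemS]; left; exact ⟨u, humin, hjmem⟩
    · intro i j hij hd
      have hij' : i.val < j.val := hij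
      set m : Fin n := ⟨i.val + 2 ^ k, by omega⟩ with hm
      have hmmin : (C k m).min = (i : WithTop (Fin n)) := by
        rw [hmin]
        refine (hcoe _ _).mpr (Fin.ext ?_)
        simp [hm]
      have hjmem : j ∈ C k m := by
        refine (ih2 m j (Fin.mk_lt_mk.mpr (by omega)) ?_).2
        simp [hm]; omega
      constructor
      · rw [hmemS]; right; exact ⟨m, hjmem, hmmin⟩
      · rw [hmemS]; left; exact ⟨m, hmmin, hjmem⟩
    · intro i j hij
      rw [hmemS] at hij
      rcases hij with ⟨u, humin, himem⟩ | ⟨u, hjmem, humin⟩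
      · rw [hmin] at humin
        have hj : j.val = u.val - 2 ^ k := by
          have := (hcoe _ _).mp humin
          have := congrArg Fin.val this
          simpa using this.symm
        have h1 := ih3 i u himem
        simp [Nat.dist] at h1 ⊢
        omega
      · rw [hmin] at humin
        have hi : i.val = u.val - 2 ^ k := by
          have := (hcoe _ _).mp humin
          have := congrArg Fin.val this
          simpa using this.symm
        have h1 := ih3 j u hjmem
        simp [Nat.dist] at h1 ⊢
        omega
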